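/- Let k be a field, E a finite set, bar : E → E a fixed-point-free involution (bar(bar e) = e and bar e ≠ e for all e), and g : E → E a bijection commuting with bar. Let M be the quotient of the free k-module on E by the submodule generated by the elements e + bar e for e ∈ E, and let g also denote the induced k-linear endomorphism of M. Then M is a free k-module of rank (card E)/2, and 2 · trace(g on M) = card {e ∈ E : g e = e} − card {e ∈ E : g e = bar e}, as an equality in k (with the cardinalities viewed in k via the natural map ℕ → k). (This computes the character of a group acting on the 1-chains of a graph: each orbit of edges contributes +1 for an edge fixed with its orientation and −1 for an edge fixed with orientation reversed, i.e., the signum character.) -/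

import Mathlib

open Finsupp

section Aux

variable {E : Type*}

/-- The setoid whose classes are the pairs `{e, bar e}`. -/
def barSetoid (bar : E → E) (hbar : ∀ e, bar (bar e) = e) : Setoid E where
  r a b := b = a ∨ b = bar a
  iseqv := by
    refine ⟨fun a => Or.inl rfl, fun {a b} h => ?_, fun {a b c} hab hbc => ?_⟩
    · rcases h with h | h
      · exact Or.inl h.symm
      · exact Or.inr (by rw [h, hbar])
    · rcases hab with h | h <;> rcases hbc with h' | h'
      · exact Or.inl (h'.trans h)
      · exact Or.inr (by rw [h', h])
      · exact Or.inr (h'.trans h)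
      · exact Or.inl (by rw [h', h, hbar])

theorem barSetoid_rel {bar : E → E} {hbar : ∀ e, bar (bar e) = e} {a b : E} :
    (barSetoid bar hbar).r a b ↔ (b = a ∨ b = bar a) := Iff.rfl

end Aux

/-- Let `k` be a field, `E` a finite set, `bar : E → E` a fixed-point-free involution and
`g : E → E` a bijection commuting with `bar`. Let `M` be the quotient of the free
`k`-module on `E` by the submodule generated by the elements `e + bar e`, and let `ḡ` be
the induced `k`-linear endomorphism of `M`. Then `M` is free of rank `card E / 2` and
`2 · trace ḡ = card {e | g e = e} − card {e | g e = bar e}` in `k`. -/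
theorem trace_on_one_chains
    (k : Type*) [Field k] (E : Type*) [Fintype E]
    (bar : E → E) (hbar : ∀ e, bar (bar e) = e) (hbar' : ∀ e, bar e ≠ e)
    (g : E → E) (hg : Function.Bijective g) (hcomm : ∀ e, g (bar e) = bar (g e))
    (N : Submodule k (E →₀ k))
    (hN : N = Submodule.span k
      {x : E →₀ k | ∃ e : E, x = Finsupp.single e 1 + Finsupp.single (bar e) 1})
    (gbar : ((E →₀ k) ⧸ N) →ₗ[k] ((E →₀ k) ⧸ N))
    (hgbar : ∀ e : E,
      gbar (Submodule.Quotient.mk (Finsupp.single e (1 : k))) =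
        Submodule.Quotient.mk (Finsupp.single (g e) (1 : k))) :
    Module.Free k ((E →₀ k) ⧸ N) ∧
    Module.finrank k ((E →₀ k) ⧸ N) = Fintype.card E / 2 ∧
    2 * LinearMap.trace k ((E →₀ k) ⧸ N) gbar =
      (Nat.card {e : E // g e = e} : k) - (Nat.card {e : E // g e = bar e} : k) := by
  classical
  set s : Setoid E := barSetoid bar hbar with hs
  set P := Quotient s with hP
  -- basic facts about the quotient
  have hmk_bar : ∀ e : E, (Quotient.mk s (bar e) : P) = Quotient.mk s e := by
    intro e
    exact (Quotient.sound (Or.inr rfl)).symm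
  have hout : ∀ e : E, e = (Quotient.mk s e).out ∨ e = bar ((Quotient.mk s e).out) := by
    intro e
    have h : Quotient.mk s ((Quotient.mk s e).out) = Quotient.mk s e := Quotient.out_eq _
    exact Quotient.exact h
  have hout_mk : ∀ p : P, Quotient.mk s p.out = p := fun p => Quotient.out_eq p
  have hexact : ∀ (p : P) (e : E), Quotient.mk s e = p → e = p.out ∨ e = bar p.out := by
    intro p e h
    have := hout e
    rwa [h] at this
  -- the sign function and the map to P →₀ k
  set ε : E → k := fun e => if e = (Quotient.mk s e).out then 1 else -1 with hε
  have hε_out : ∀ p : P, ε p.out = 1 := by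
    intro p
    simp only [hε]
    rw [if_pos]
    rw [hout_mk]
  have hε_bar : ∀ e : E, ε (bar e) = - ε e := by
    intro e
    have hbe : (Quotient.mk s (bar e)).out = (Quotient.mk s e).out := by rw [hmk_bar]
    simp only [hε]
    rw [hbe]
    rcases hout e with h | h
    · rw [if_pos h, if_neg (show bar e ≠ (Quotient.mk s e).out from by
        rw [← h]; exact hbar' e)]
    · have h2 : bar e = (Quotient.mk s e).out := by nth_rewrite 1 [h]; rw [hbar]
      have hne : e ≠ (Quotient.mk s e).out := fun hh => hbar' _ (h.symm.trans hh)
      rw [if_pos h2, if_neg hne]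
      norm_num
  haveI : Fintype P := Quotient.fintype s
  have hbarinj : Function.Injective bar := Function.LeftInverse.injective hbar
  -- the map down to `P →₀ k`
  set φ0 : (E →₀ k) →ₗ[k] (P →₀ k) :=
    Finsupp.lsum k (fun e => ε e • Finsupp.lsingle (Quotient.mk s e)) with hφ0def
  have hφ0 : ∀ (e : E) (c : k), φ0 (Finsupp.single e c) =
      ε e • Finsupp.single (Quotient.mk s e) c := by
    intro e c
    simp [hφ0def]
  have hle : N ≤ LinearMap.ker φ0 := by
    rw [hN, Submodule.span_le]
    rintro x ⟨e, rfl⟩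
    simp only [SetLike.mem_coe, LinearMap.mem_ker, map_add, hφ0, hmk_bar, hε_bar]
    module
  set φ : ((E →₀ k) ⧸ N) →ₗ[k] (P →₀ k) := N.liftQ φ0 hle with hφdef
  have hφ : ∀ x : E →₀ k, φ (Submodule.Quotient.mk x) = φ0 x := fun x => rfl
  set ψ : (P →₀ k) →ₗ[k] ((E →₀ k) ⧸ N) :=
    Finsupp.lsum k (fun p : P => N.mkQ.comp (Finsupp.lsingle p.out)) with hψdef
  have hψ : ∀ (p : P) (c : k), ψ (Finsupp.single p c) =
      Submodule.Quotient.mk (Finsupp.single p.out c) := by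
    intro p c
    simp [hψdef]
  have hφψ : φ.comp ψ = LinearMap.id := by
    apply Finsupp.lhom_ext
    intro p c
    simp only [LinearMap.comp_apply, hψ, LinearMap.id_apply, hφ, hφ0, hout_mk, hε_out, one_smul]
  have hψφ : ψ.comp φ = LinearMap.id := by
    apply Submodule.linearMap_qext
    apply Finsupp.lhom_ext
    intro e c
    simp only [LinearMap.comp_apply, Submodule.mkQ_apply, hφ, hφ0, map_smul, hψ,
      LinearMap.id_apply]
    rcases hout e with h | h
    · rw [← h, hε]
      simp only [if_pos h, one_smul]
    · have h2 : (Quotient.mk s e).out = bar e := by conv_rhs => rw [h, hbar]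
      have hne : e ≠ (Quotient.mk s e).out := fun hh => hbar' _ (h.symm.trans hh)
      rw [h2, hε]
      simp only [if_neg hne, neg_smul, one_smul]
      have hmem : Finsupp.single (bar e) c + Finsupp.single e c ∈ N := by
        rw [hN]
        have heq : Finsupp.single (bar e) c + Finsupp.single e c
            = c • (Finsupp.single (bar e) 1 + Finsupp.single (bar (bar e)) 1) := by
          rw [hbar, smul_add, Finsupp.smul_single', Finsupp.smul_single', mul_one, add_comm]
        rw [heq]
        exact Submodule.smul_mem _ c (Submodule.subset_span ⟨bar e, rfl⟩)
      rw [neg_eq_iff_add_eq_zero, ← Submodule.Quotient.mk_add,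
        Submodule.Quotient.mk_eq_zero]
      exact hmem
  set eL : ((E →₀ k) ⧸ N) ≃ₗ[k] (P →₀ k) := LinearEquiv.ofLinear φ ψ hφψ hψφ with heLdef
  have hfree : Module.Free k ((E →₀ k) ⧸ N) := Module.Free.of_equiv eL.symm
  -- fibers of the projection to P
  have hfiber : ∀ p : P, (Finset.univ.filter fun e : E => Quotient.mk s e = p)
      = {p.out, bar p.out} := by
    intro p
    ext e
    simp only [Finset.mem_filter, Finset.mem_univ, true_and, Finset.mem_insert,
      Finset.mem_singleton]
    constructor
    · exact hexact p e
    · rintro (rfl | rfl)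
      · exact hout_mk p
      · rw [hmk_bar, hout_mk]
  have hcardE : Fintype.card E = 2 * Fintype.card P := by
    rw [← Finset.card_univ (α := E),
      Finset.card_eq_sum_card_fiberwise (f := fun e : E => Quotient.mk s e)
        (t := Finset.univ) (fun x _ => Finset.mem_univ _)]
    rw [Finset.sum_congr rfl (fun p _ => by
      rw [hfiber p, Finset.card_pair (fun hh => hbar' p.out hh.symm)])]
    simp [Finset.card_univ, mul_comm]
    exact Fintype.card_congr (Equiv.refl _)
  have hfinrank : Module.finrank k ((E →₀ k) ⧸ N) = Fintype.card E / 2 := by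
    rw [eL.finrank_eq, Module.finrank_finsupp_self, hcardE]
    omega
  -- the trace computation
  have htr : LinearMap.trace k ((E →₀ k) ⧸ N) gbar =
      (∑ p : P, if g p.out = p.out then (1:k) else 0)
        - (∑ p : P, if g p.out = bar p.out then (1:k) else 0) := by
    rw [← LinearMap.trace_conj' gbar eL,
      LinearMap.trace_eq_matrix_trace k Finsupp.basisSingleOne, Matrix.trace,
      ← Finset.sum_sub_distrib]
    apply Finset.sum_congr rfl
    intro p _
    have happ : (eL.conj gbar) (Finsupp.single p 1) =
        ε (g p.out) • Finsupp.single (Quotient.mk s (g p.out)) (1:k) := by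
      rw [LinearEquiv.conj_apply_apply]
      rw [show eL.symm (Finsupp.single p 1) = ψ (Finsupp.single p 1) from rfl, hψ, hgbar,
        show ∀ y, eL y = φ y from fun _ => rfl, hφ, hφ0]
    rw [Matrix.diag_apply, LinearMap.toMatrix_apply, Finsupp.coe_basisSingleOne, happ,
      Finsupp.basisSingleOne_repr, LinearEquiv.refl_apply, Finsupp.smul_apply,
      Finsupp.single_apply, smul_eq_mul]
    by_cases hA : g p.out = p.out
    · have h1 : Quotient.mk s (g p.out) = p := by rw [hA, hout_mk]
      have h2 : ¬ g p.out = bar p.out := fun hh => hbar' p.out (hh ▸ hA)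
      rw [if_pos hA, if_neg h2, if_pos h1, hA, hε_out, sub_zero, mul_one]
    · by_cases hB : g p.out = bar p.out
      · have h1 : Quotient.mk s (g p.out) = p := by rw [hB, hmk_bar, hout_mk]
        rw [if_neg hA, if_pos hB, if_pos h1, hB, hε_bar, hε_out, zero_sub, mul_one]
      · have h1 : ¬ Quotient.mk s (g p.out) = p := fun hh => by
          rcases hexact p (g p.out) hh with h | h
          · exact hA h
          · exact hB h
        rw [if_neg hA, if_neg hB, if_neg h1, mul_zero, sub_zero]
  -- counting fixed elements
  have hbariff : ∀ x : E, (g (bar x) = bar x ↔ g x = x) := by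
    intro x
    rw [hcomm]
    exact ⟨fun hh => by have := hbarinj hh; exact this, fun hh => by rw [hh]⟩
  have hbariff' : ∀ x : E, (g (bar x) = bar (bar x) ↔ g x = bar x) := by
    intro x
    rw [hcomm, hbar]
    constructor
    · intro hh
      rw [← hbar (g x), hh]
    · intro hh
      rw [hh, hbar]
  have hcount : ∀ (cond : E → Prop) (_ : ∀ x, cond (bar x) ↔ cond x),
      (Nat.card {e : E // cond e} : k) = 2 * ∑ p : P, if cond p.out then (1:k) else 0 := by
    intro cond hcond
    classical
    rw [Nat.card_eq_fintype_card, Fintype.card_subtype]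
    rw [Finset.card_eq_sum_card_fiberwise (f := fun e : E => Quotient.mk s e)
        (t := Finset.univ) (fun x _ => Finset.mem_univ _)]
    rw [Nat.cast_sum, Finset.mul_sum]
    apply Finset.sum_congr rfl
    intro p _
    have hff : (Finset.univ.filter fun e : E => cond e).filter
        (fun e => Quotient.mk s e = p) =
        (Finset.univ.filter fun e : E => Quotient.mk s e = p).filter cond := by
      ext e
      simp only [Finset.mem_filter, Finset.mem_univ, true_and]
      tauto
    rw [hff, hfiber p]
    by_cases hc : cond p.out
    · have hc2 : cond (bar p.out) := (hcond p.out).2 hc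
      rw [Finset.filter_true_of_mem (by
        intro e he
        simp only [Finset.mem_insert, Finset.mem_singleton] at he
        rcases he with rfl | rfl
        · exact hc
        · exact hc2)]
      rw [Finset.card_pair (fun hh => hbar' p.out hh.symm), if_pos hc]
      norm_num
    · have hc2 : ¬ cond (bar p.out) := fun hh => hc ((hcond p.out).1 hh)
      rw [Finset.filter_false_of_mem (by
        intro e he
        simp only [Finset.mem_insert, Finset.mem_singleton] at he
        rcases he with rfl | rfl
        · exact hc
        · exact hc2)]
      rw [if_neg hc]
      simp
  have hF := hcount (fun e => g e = e) hbariff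
  have hB := hcount (fun e => g e = bar e) hbariff'
  refine ⟨hfree, hfinrank, ?_⟩
  rw [htr, hF, hB]
  ring
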